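/- Let H be a graded connected Hopf algebra and D = S ⋆ Y its Dynkin operator. Then for every homogeneous x ∈ H_n with n > 0, D(x) = n·x − m∘(id⊗D)∘Δ'(x), where Δ'(x) = Δ(x) − 1⊗x − x⊗1 is the reduced coproduct. -/

import Mathlib

open scoped TensorProduct

/-- Convolution product of linear endomorphisms of a Hopf algebra:
`φ ⋆ ψ = m ∘ (φ ⊗ ψ) ∘ Δ`. -/
noncomputable def conv {H : Type} [CommRing H] [HopfAlgebra ℚ H]
    (φ ψ : H →ₗ[ℚ] H) : H →ₗ[ℚ] H :=
  LinearMap.mul' ℚ H ∘ₗ TensorProduct.map φ ψ ∘ₗ (Coalgebra.comul (R := ℚ))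

/-- The grading operator `Y`, multiplying a homogeneous element of weight `n` by `n`. -/
noncomputable def gradingOp {H : Type} [CommRing H] [Algebra ℚ H]
    (𝒜 : ℕ → Submodule ℚ H) [GradedAlgebra 𝒜] : H →ₗ[ℚ] H :=
  (DirectSum.toModule ℚ ℕ H fun n => (n : ℚ) • (𝒜 n).subtype) ∘ₗ
    (DirectSum.decomposeLinearEquiv 𝒜).toLinearMap

/-- The Dynkin operator `D = S ⋆ Y`. -/
noncomputable def dynkinOp {H : Type} [CommRing H] [HopfAlgebra ℚ H]
    (𝒜 : ℕ → Submodule ℚ H) [GradedAlgebra 𝒜] : H →ₗ[ℚ] H :=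
  conv (HopfAlgebra.antipode (R := ℚ)) (gradingOp 𝒜)

/-- The operator `Π`, equal to the identity on `H₀` and to `Y⁻¹ ∘ D` on `H_{>0}`:
on a homogeneous element `x` of degree `n > 0` it acts as `x ↦ D(x)/n`. -/
noncomputable def piOp {H : Type} [CommRing H] [HopfAlgebra ℚ H]
    (𝒜 : ℕ → Submodule ℚ H) [GradedAlgebra 𝒜] : H →ₗ[ℚ] H :=
  (DirectSum.toModule ℚ ℕ H fun n =>
      if n = 0 then (𝒜 n).subtype
      else ((n : ℚ)⁻¹ • dynkinOp 𝒜) ∘ₗ (𝒜 n).subtype) ∘ₗ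
    (DirectSum.decomposeLinearEquiv 𝒜).toLinearMap

section Aux
open TensorProduct LinearMap Coalgebra

variable {H : Type} [CommRing H] [HopfAlgebra ℚ H]
  (𝒜 : ℕ → Submodule ℚ H) [GradedAlgebra 𝒜]

lemma gradingOp_of_mem {n : ℕ} {x : H} (hx : x ∈ 𝒜 n) :
    gradingOp 𝒜 x = (n : ℚ) • x := by
  unfold gradingOp
  simp only [LinearMap.comp_apply, LinearEquiv.coe_coe,
    DirectSum.decomposeLinearEquiv_apply, DirectSum.decompose_of_mem 𝒜 hx,
    ← DirectSum.lof_eq_of ℚ, DirectSum.toModule_lof]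
  rfl

lemma gradingOp_one : gradingOp 𝒜 (1 : H) = 0 := by
  rw [gradingOp_of_mem 𝒜 (SetLike.one_mem_graded 𝒜)]
  simp

lemma dynkinOp_one : dynkinOp 𝒜 (1 : H) = 0 := by
  unfold dynkinOp conv
  simp only [LinearMap.comp_apply, Bialgebra.comul_one, Algebra.TensorProduct.one_def,
    TensorProduct.map_tmul, gradingOp_one, TensorProduct.tmul_zero, map_zero]

lemma conv_id_dynkinOp : conv LinearMap.id (dynkinOp 𝒜) = gradingOp 𝒜 := by
  set m := LinearMap.mul' ℚ H
  set S : H →ₗ[ℚ] H := HopfAlgebra.antipode (R := ℚ)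
  set Y := gradingOp 𝒜
  set Δ : H →ₗ[ℚ] H ⊗[ℚ] H := Coalgebra.comul (R := ℚ)
  set η : ℚ →ₗ[ℚ] H := Algebra.linearMap ℚ H
  set ε : H →ₗ[ℚ] ℚ := Coalgebra.counit (R := ℚ)
  have hmapD : TensorProduct.map LinearMap.id (dynkinOp 𝒜)
      = (TensorProduct.map LinearMap.id (m ∘ₗ TensorProduct.map S Y)) ∘ₗ Δ.lTensor H := by
    apply TensorProduct.ext'
    intro x y
    simp [dynkinOp, conv]
    rfl
  have L1 : (m ∘ₗ TensorProduct.map LinearMap.id (m ∘ₗ TensorProduct.map S Y)) ∘ₗ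
      (TensorProduct.assoc ℚ H H H).toLinearMap
      = m ∘ₗ TensorProduct.map (m ∘ₗ S.lTensor H) Y := by
    apply TensorProduct.ext_threefold
    intro x y z
    simp [m, mul_assoc]
  have L2 : TensorProduct.map (m ∘ₗ S.lTensor H) Y ∘ₗ Δ.rTensor H
      = TensorProduct.map ((m ∘ₗ S.lTensor H) ∘ₗ Δ) Y := by
    apply TensorProduct.ext'
    intro x y
    simp
  have hantipode : (m ∘ₗ S.lTensor H) ∘ₗ Δ = η ∘ₗ ε := by
    rw [LinearMap.comp_assoc]
    exact HopfAlgebra.mul_antipode_lTensor_comul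
  have L3 : TensorProduct.map (η ∘ₗ ε) Y = TensorProduct.map η Y ∘ₗ ε.rTensor H := by
    apply TensorProduct.ext'
    intro x y
    simp
  have hcounit : ε.rTensor H ∘ₗ Δ = TensorProduct.mk ℚ ℚ H 1 :=
    Coalgebra.rTensor_counit_comp_comul
  have final : m ∘ₗ TensorProduct.map η Y ∘ₗ (TensorProduct.mk ℚ ℚ H 1) = Y := by
    ext x
    simp [m, η]
  calc conv LinearMap.id (dynkinOp 𝒜)
      = m ∘ₗ TensorProduct.map LinearMap.id (dynkinOp 𝒜) ∘ₗ Δ := rfl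
    _ = m ∘ₗ (TensorProduct.map LinearMap.id (m ∘ₗ TensorProduct.map S Y)) ∘ₗ
          (Δ.lTensor H ∘ₗ Δ) := by rw [hmapD]; simp only [LinearMap.comp_assoc]
    _ = m ∘ₗ (TensorProduct.map LinearMap.id (m ∘ₗ TensorProduct.map S Y)) ∘ₗ
          ((TensorProduct.assoc ℚ H H H).toLinearMap ∘ₗ Δ.rTensor H ∘ₗ Δ) := by
          rw [Coalgebra.coassoc]
    _ = ((m ∘ₗ TensorProduct.map LinearMap.id (m ∘ₗ TensorProduct.map S Y)) ∘ₗ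
          (TensorProduct.assoc ℚ H H H).toLinearMap) ∘ₗ Δ.rTensor H ∘ₗ Δ := by
          simp only [LinearMap.comp_assoc]
    _ = (m ∘ₗ TensorProduct.map (m ∘ₗ S.lTensor H) Y) ∘ₗ Δ.rTensor H ∘ₗ Δ := by rw [L1]
    _ = m ∘ₗ (TensorProduct.map (m ∘ₗ S.lTensor H) Y ∘ₗ Δ.rTensor H) ∘ₗ Δ := by
          simp only [LinearMap.comp_assoc]
    _ = m ∘ₗ TensorProduct.map ((m ∘ₗ S.lTensor H) ∘ₗ Δ) Y ∘ₗ Δ := by rw [L2]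
    _ = m ∘ₗ TensorProduct.map (η ∘ₗ ε) Y ∘ₗ Δ := by rw [hantipode]
    _ = m ∘ₗ TensorProduct.map η Y ∘ₗ (ε.rTensor H ∘ₗ Δ) := by
          rw [L3]; simp only [LinearMap.comp_assoc]
    _ = m ∘ₗ TensorProduct.map η Y ∘ₗ (TensorProduct.mk ℚ ℚ H 1) := by rw [hcounit]
    _ = Y := final

end Aux

/-- The Dynkin operator `D = S ⋆ Y` satisfies the recursion
`D(x) = n·x − m∘(id⊗D)∘Δ'(x)` for homogeneous `x ∈ Hₙ`, `n > 0`, where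
`Δ'(x) = Δ(x) − 1⊗x − x⊗1` is the reduced coproduct. -/
theorem dynkinOp_recursion {H : Type} [CommRing H] [HopfAlgebra ℚ H]
    (𝒜 : ℕ → Submodule ℚ H) [GradedAlgebra 𝒜]
    (hconn : 𝒜 0 = (1 : Submodule ℚ H))
    (hΔ : ∀ n : ℕ, ∀ x ∈ 𝒜 n, (Coalgebra.comul (R := ℚ)) x ∈
      ⨆ (p : ℕ × ℕ) (_ : p.1 + p.2 = n),
        LinearMap.range (TensorProduct.map (𝒜 p.1).subtype (𝒜 p.2).subtype)) :
    ∀ n : ℕ, 0 < n → ∀ x ∈ 𝒜 n,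
      dynkinOp 𝒜 x = (n : ℚ) • x -
        LinearMap.mul' ℚ H
          (TensorProduct.map LinearMap.id (dynkinOp 𝒜)
            ((Coalgebra.comul (R := ℚ)) x - (1 : H) ⊗ₜ[ℚ] x - x ⊗ₜ[ℚ] (1 : H))) := by
  intro n hn x hx
  have key : LinearMap.mul' ℚ H
      (TensorProduct.map LinearMap.id (dynkinOp 𝒜) ((Coalgebra.comul (R := ℚ)) x))
      = (n : ℚ) • x := by
    have := LinearMap.congr_fun (conv_id_dynkinOp 𝒜) x
    simpa [conv, gradingOp_of_mem 𝒜 hx] using this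
  simp only [map_sub, TensorProduct.map_tmul, LinearMap.id_coe, id_eq, key,
    dynkinOp_one, TensorProduct.tmul_zero, map_zero, LinearMap.mul'_apply, one_mul]
  ring
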